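/- Let (𝔊, ·, [·,·]) be a transposed Poisson superalgebra. Then for all homogeneous h, x, y, z ∈ 𝔊: (−1)^{|x||z|} [h·x, [y,z]] + (−1)^{|x||y|} [h·y, [z,x]] + (−1)^{|y||z|} [h·z, [x,y]] = 0. -/

import Mathlib

/-- The sign `(-1)^{ij}` in a field `K`, for parities `i j : ZMod 2`. -/
def sg (K : Type*) [Field K] (i j : ZMod 2) : K := (-1) ^ (i.val * j.val)

lemma sg_comm (K : Type*) [Field K] (i j : ZMod 2) : sg K i j = sg K j i := by
  unfold sg; rw [Nat.mul_comm]

lemma sg_sq (K : Type*) [Field K] (i j : ZMod 2) : sg K i j * sg K i j = 1 := by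
  unfold sg; rw [← pow_add]; exact Even.neg_one_pow ⟨_, rfl⟩

lemma sg_add_left (K : Type*) [Field K] (i j k : ZMod 2) :
    sg K (i + j) k = sg K i k * sg K j k := by
  have key : ∀ a b c : ZMod 2, ((a + b).val * c.val) % 2 = (a.val * c.val + b.val * c.val) % 2 := by
    decide
  unfold sg
  rw [← pow_add, neg_one_pow_eq_pow_mod_two, key, ← neg_one_pow_eq_pow_mod_two]

lemma sg_add_right (K : Type*) [Field K] (i j k : ZMod 2) :
    sg K i (j + k) = sg K i j * sg K i k := by
  rw [sg_comm, sg_add_left, sg_comm K j i, sg_comm K k i]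

/-- Cyclic form of the super Jacobi identity. -/
lemma cyc_jacobi {K V : Type*} [Field K] [AddCommGroup V] [Module K V]
    (𝒢 : ZMod 2 → Submodule K V) (b : V →ₗ[K] V →ₗ[K] V)
    (hb_mem : ∀ (i j : ZMod 2) (x y : V), x ∈ 𝒢 i → y ∈ 𝒢 j → b x y ∈ 𝒢 (i + j))
    (hskew : ∀ (i j : ZMod 2) (x y : V), x ∈ 𝒢 i → y ∈ 𝒢 j →
      b x y = -(sg K i j • b y x))
    (hjacobi : ∀ (i j k : ZMod 2) (x y z : V), x ∈ 𝒢 i → y ∈ 𝒢 j → z ∈ 𝒢 k →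
      b x (b y z) = b (b x y) z + sg K i j • b y (b x z))
    (i j k : ZMod 2) (x y z : V) (hx : x ∈ 𝒢 i) (hy : y ∈ 𝒢 j) (hz : z ∈ 𝒢 k) :
    sg K i k • b x (b y z) + sg K i j • b y (b z x) + sg K j k • b z (b x y) = 0 := by
  have hj := hjacobi i j k x y z hx hy hz
  have h1 : b (b x y) z = -(sg K (i+j) k • b z (b x y)) :=
    hskew (i+j) k _ _ (hb_mem i j x y hx hy) hz
  have h2 : b x z = -(sg K i k • b z x) := hskew i k x z hx hz
  rw [h1, h2, map_neg, map_smul] at hj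
  rw [hj, sg_add_left]
  match_scalars
  · linear_combination (-(sg K j k)) * sg_sq K i k
  · linear_combination (-(sg K i j)) * sg_sq K i k

/-- in a transposed Poisson superalgebra `(V, m, b)` over a field `K` of
characteristic zero, for all homogeneous `h, x, y, z` of parities `l, i, j, k`:
`(−1)^{|x||z|}[h·x,[y,z]] + (−1)^{|x||y|}[h·y,[z,x]] + (−1)^{|y||z|}[h·z,[x,y]] = 0`. -/
theorem tpsa_identity_three
    {K V : Type*} [Field K] [CharZero K] [AddCommGroup V] [Module K V]
    (𝒢 : ZMod 2 → Submodule K V) [DirectSum.Decomposition 𝒢]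
    (m : V →ₗ[K] V →ₗ[K] V) (b : V →ₗ[K] V →ₗ[K] V)
    (hm_mem : ∀ (i j : ZMod 2) (x y : V), x ∈ 𝒢 i → y ∈ 𝒢 j → m x y ∈ 𝒢 (i + j))
    (hassoc : ∀ x y z : V, m (m x y) z = m x (m y z))
    (hcomm : ∀ (i j : ZMod 2) (x y : V), x ∈ 𝒢 i → y ∈ 𝒢 j → m x y = sg K i j • m y x)
    (hb_mem : ∀ (i j : ZMod 2) (x y : V), x ∈ 𝒢 i → y ∈ 𝒢 j → b x y ∈ 𝒢 (i + j))
    (hskew : ∀ (i j : ZMod 2) (x y : V), x ∈ 𝒢 i → y ∈ 𝒢 j →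
      b x y = -(sg K i j • b y x))
    (hjacobi : ∀ (i j k : ZMod 2) (x y z : V), x ∈ 𝒢 i → y ∈ 𝒢 j → z ∈ 𝒢 k →
      b x (b y z) = b (b x y) z + sg K i j • b y (b x z))
    (hcompat : ∀ (i j k : ZMod 2) (x y z : V), x ∈ 𝒢 i → y ∈ 𝒢 j → z ∈ 𝒢 k →
      (2 : K) • m z (b x y) = b (m z x) y + sg K i k • b x (m z y))
    (l i j k : ZMod 2) (h x y z : V)
    (hh : h ∈ 𝒢 l) (hx : x ∈ 𝒢 i) (hy : y ∈ 𝒢 j) (hz : z ∈ 𝒢 k) :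
    sg K i k • b (m h x) (b y z) + sg K i j • b (m h y) (b z x)
      + sg K j k • b (m h z) (b x y) = 0 := by
  have hyz := hb_mem j k y z hy hz
  have hzx := hb_mem k i z x hz hx
  have hxy := hb_mem i j x y hx hy
  have hmx := hm_mem l i h x hh hx
  have hmy := hm_mem l j h y hh hy
  have hmz := hm_mem l k h z hh hz
  -- expansions of 4 h·[u,[v,w]]
  have c1 := hcompat i (j+k) l x (b y z) h hx hyz hh
  have c1' := hcompat j k l y z h hy hz hh
  have e1 : (2:K) • (b x) (m h (b y z))
      = b x (b (m h y) z) + sg K j l • b x (b y (m h z)) := by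
    rw [← map_smul, c1', map_add, map_smul]
  have d1 : (4:K) • m h (b x (b y z)) = (2:K) • b (m h x) (b y z)
      + sg K i l • b x (b (m h y) z) + (sg K i l * sg K j l) • b x (b y (m h z)) := by
    have h4 : (4:K) • m h (b x (b y z)) = (2:K) • ((2:K) • m h (b x (b y z))) := by
      module
    rw [h4, c1, smul_add, smul_comm (2:K) (sg K i l), e1]
    module
  have c2 := hcompat j (k+i) l y (b z x) h hy hzx hh
  have c2' := hcompat k i l z x h hz hx hh
  have e2 : (2:K) • (b y) (m h (b z x))
      = b y (b (m h z) x) + sg K k l • b y (b z (m h x)) := by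
    rw [← map_smul, c2', map_add, map_smul]
  have d2 : (4:K) • m h (b y (b z x)) = (2:K) • b (m h y) (b z x)
      + sg K j l • b y (b (m h z) x) + (sg K j l * sg K k l) • b y (b z (m h x)) := by
    have h4 : (4:K) • m h (b y (b z x)) = (2:K) • ((2:K) • m h (b y (b z x))) := by
      module
    rw [h4, c2, smul_add, smul_comm (2:K) (sg K j l), e2]
    module
  have c3 := hcompat k (i+j) l z (b x y) h hz hxy hh
  have c3' := hcompat i j l x y h hx hy hh
  have e3 : (2:K) • (b z) (m h (b x y))
      = b z (b (m h x) y) + sg K i l • b z (b x (m h y)) := by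
    rw [← map_smul, c3', map_add, map_smul]
  have d3 : (4:K) • m h (b z (b x y)) = (2:K) • b (m h z) (b x y)
      + sg K k l • b z (b (m h x) y) + (sg K k l * sg K i l) • b z (b x (m h y)) := by
    have h4 : (4:K) • m h (b z (b x y)) = (2:K) • ((2:K) • m h (b z (b x y))) := by
      module
    rw [h4, c3, smul_add, smul_comm (2:K) (sg K k l), e3]
    module
  -- cyclic Jacobi instances
  have E0 := cyc_jacobi 𝒢 b hb_mem hskew hjacobi i j k x y z hx hy hz
  have E0' : sg K i k • m h (b x (b y z)) + sg K i j • m h (b y (b z x))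
      + sg K j k • m h (b z (b x y)) = 0 := by
    have := congrArg (fun v => m h v) E0
    simpa using this
  have F : sg K i k • ((4:K) • m h (b x (b y z)))
      + sg K i j • ((4:K) • m h (b y (b z x)))
      + sg K j k • ((4:K) • m h (b z (b x y))) = 0 := by
    have := congrArg (fun v : V => (4:K) • v) E0'
    simp only [smul_add, smul_zero] at this
    rw [smul_comm (4:K) (sg K i k), smul_comm (4:K) (sg K i j),
      smul_comm (4:K) (sg K j k)] at this
    exact this
  rw [d1, d2, d3] at F
  have J1 := cyc_jacobi 𝒢 b hb_mem hskew hjacobi (l+i) j k (m h x) y z hmx hy hz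
  have J2 := cyc_jacobi 𝒢 b hb_mem hskew hjacobi i (l+j) k x (m h y) z hx hmy hz
  have J3 := cyc_jacobi 𝒢 b hb_mem hskew hjacobi i j (l+k) x y (m h z) hx hy hmz
  have key : sg K i k • b (m h x) (b y z) + sg K i j • b (m h y) (b z x)
      + sg K j k • b (m h z) (b x y)
      = (sg K i k • ((2:K) • b (m h x) (b y z)
          + sg K i l • b x (b (m h y) z) + (sg K i l * sg K j l) • b x (b y (m h z)))
        + sg K i j • ((2:K) • b (m h y) (b z x)
          + sg K j l • b y (b (m h z) x) + (sg K j l * sg K k l) • b y (b z (m h x)))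
        + sg K j k • ((2:K) • b (m h z) (b x y)
          + sg K k l • b z (b (m h x) y) + (sg K k l * sg K i l) • b z (b x (m h y))))
      - sg K k l • (sg K (l+i) k • b (m h x) (b y z)
          + sg K (l+i) j • b y (b z (m h x)) + sg K j k • b z (b (m h x) y))
      - sg K i l • (sg K i k • b x (b (m h y) z)
          + sg K i (l+j) • b (m h y) (b z x) + sg K (l+j) k • b z (b x (m h y)))
      - sg K j l • (sg K i (l+k) • b x (b y (m h z))
          + sg K i j • b y (b (m h z) x) + sg K j (l+k) • b (m h z) (b x y)) := by
    simp only [sg_add_left, sg_add_right, sg_comm K l i, sg_comm K l j, sg_comm K l k]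
    match_scalars
    any_goals ring
    · linear_combination (sg K i k) * sg_sq K k l
    · linear_combination (sg K i j) * sg_sq K i l
    · linear_combination (sg K j k) * sg_sq K j l
  rw [key, F, J1, J2, J3]
  simp
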